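/- Let n ≥ 1 and let m_1, …, m_n be odd positive integers. If P ∈ ℂ[X, X^{−1}] is a Laurent polynomial and R = P/Q_n ∈ RatFunc ℂ, then there exists a Laurent polynomial P′ ∈ ℂ[X, X^{−1}] with 𝔉(R) = P′/Q_n. In other words, the class of rational functions with denominator Q_n and Laurent-polynomial numerator is invariant under 𝔉. -/

import Mathlib

/-- The `n`-th coefficient of the Laurent expansion at `0` of a rational function. -/
noncomputable def coeffL (R : RatFunc ℂ) (n : ℤ) : ℂ :=
  ((R : LaurentSeries ℂ)).coeff n

/-- A rational function is of the form `P/Q` with `P` a Laurent polynomial, i.e. of the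
form `P₀/(X^s Q)` with `P₀` an ordinary polynomial and `s : ℕ`. -/
def IsLaurentOver (Q : Polynomial ℂ) (R : RatFunc ℂ) : Prop :=
  ∃ (P : Polynomial ℂ) (s : ℕ),
    R = algebraMap (Polynomial ℂ) (RatFunc ℂ) P /
      (RatFunc.X ^ s * algebraMap (Polynomial ℂ) (RatFunc ℂ) Q)


open Polynomial HahnSeries

noncomputable def Dop (f : LaurentSeries ℂ) : LaurentSeries ℂ where
  coeff k := f.coeff (2*k+1)
  isPWO_support' := by
    intro u
    obtain ⟨a, b, hab, hle⟩ := f.isPWO_support.exists_lt (f := fun n => 2 * (u n).1 + 1)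
      (fun n => (u n).2)
    exact ⟨a, b, hab, show (u a).1 ≤ (u b).1 by omega⟩

lemma Dop_coeff (f : LaurentSeries ℂ) (k : ℤ) : (Dop f).coeff k = f.coeff (2*k+1) := rfl

lemma Dop_add (f g : LaurentSeries ℂ) : Dop (f + g) = Dop f + Dop g := by
  ext k; simp [Dop_coeff]

lemma Dop_single_mul (i : ℤ) (c : ℂ) (f : LaurentSeries ℂ) :
    Dop (single (2*i) c * f) = single i c * Dop f := by
  ext k
  have h1 : (2*k+1 : ℤ) = (2*(k-i)+1) + 2*i := by ring
  have h2 : (k : ℤ) = (k - i) + i := by ring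
  rw [Dop_coeff, h1, coeff_single_mul_add, h2, coeff_single_mul_add, Dop_coeff]
  norm_num

noncomputable def Lp (p : Polynomial ℂ) : LaurentSeries ℂ :=
  HahnSeries.ofPowerSeries ℤ ℂ (p : PowerSeries ℂ)

lemma Lp_coe (p : Polynomial ℂ) :
    ((algebraMap (Polynomial ℂ) (RatFunc ℂ) p : RatFunc ℂ) : LaurentSeries ℂ) = Lp p := by
  rw [Lp, RatFunc.coe_coe]; rfl

lemma Lp_mul (p q : Polynomial ℂ) : Lp (p * q) = Lp p * Lp q := by
  simp [Lp, Polynomial.coe_mul]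

lemma Lp_add (p q : Polynomial ℂ) : Lp (p + q) = Lp p + Lp q := by
  simp [Lp, Polynomial.coe_add]

lemma Lp_monomial (j : ℕ) (c : ℂ) : Lp (monomial j c) = single (j : ℤ) c := by
  rw [Lp, ← Polynomial.C_mul_X_pow_eq_monomial]
  push_cast [Polynomial.coe_mul, Polynomial.coe_pow, Polynomial.coe_C, Polynomial.coe_X]
  rw [ofPowerSeries_C, ofPowerSeries_X, single_pow, HahnSeries.C_apply, single_mul_single]
  simp

lemma Lp_coeff_nat (p : Polynomial ℂ) (k : ℕ) : (Lp p).coeff (k : ℤ) = p.coeff k := by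
  rw [Lp, ofPowerSeries_apply_coeff, Polynomial.coeff_coe]

lemma Lp_coeff_neg (p : Polynomial ℂ) (k : ℤ) (hk : k < 0) : (Lp p).coeff k = 0 := by
  rw [Lp, ofPowerSeries_apply]
  refine embDomain_notin_range ?_
  rintro ⟨a, ha⟩
  simp only [Nat.castOrderEmbedding_apply] at ha
  omega

lemma Dop_comp_sq_mul (p : Polynomial ℂ) (f : LaurentSeries ℂ) :
    Dop (Lp (p.comp (X^2)) * f) = Lp p * Dop f := by
  induction p using Polynomial.induction_on' with
  | add p q hp hq => rw [add_comp, Lp_add, add_mul, Dop_add, hp, hq, Lp_add, add_mul]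
  | monomial j c =>
      have h : (monomial j c).comp (X^2 : Polynomial ℂ) = monomial (2*j) c := by
        rw [← Polynomial.C_mul_X_pow_eq_monomial, ← Polynomial.C_mul_X_pow_eq_monomial,
          mul_comp, C_comp, pow_comp, X_comp, ← pow_mul]
      rw [h, Lp_monomial, Lp_monomial]
      have : ((2*j : ℕ) : ℤ) = 2 * (j : ℤ) := by push_cast; ring
      rw [this, Dop_single_mul]

lemma key_poly (n : ℕ) (m : Fin n → ℕ) (hodd : ∀ k, Odd (m k)) (s : ℕ) :
    ((X : Polynomial ℂ) ^ s * ∏ k, (X ^ m k - 1)) *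
      ((-1)^n * ((X:Polynomial ℂ) ^ s * (∏ k, ((X:Polynomial ℂ) ^ m k - 1)).comp (-X)))
    = ((X:Polynomial ℂ) ^ s * ∏ k, (X ^ m k - 1)).comp (X ^ 2) := by
  have hc : ((∏ k, ((X:Polynomial ℂ) ^ m k - 1))).comp (-X)
      = (-1)^n * ∏ k, ((X:Polynomial ℂ) ^ m k + 1) := by
    rw [prod_comp]
    have h1 : ∀ k : Fin n, ((X : Polynomial ℂ) ^ m k - 1).comp (-X)
        = (-1) * (X ^ m k + 1) := by
      intro k
      rw [sub_comp, pow_comp, X_comp, one_comp, (hodd k).neg_pow]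
      ring
    rw [Finset.prod_congr rfl fun k _ => h1 k, Finset.prod_mul_distrib, Finset.prod_const]
    simp
  have h2 : ∀ k : Fin n, ((X:Polynomial ℂ) ^ m k - 1).comp (X ^ 2)
      = (X ^ m k - 1) * (X ^ m k + 1) := by
    intro k
    rw [sub_comp, pow_comp, X_comp, one_comp, ← pow_mul, two_mul, _root_.pow_add]
    ring
  rw [hc, mul_comp, pow_comp, X_comp, prod_comp, Finset.prod_congr rfl fun k _ => h2 k,
    Finset.prod_mul_distrib]
  have hsign : ((-1:Polynomial ℂ)^n) * (-1)^n = 1 := by rw [← mul_pow]; norm_num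
  linear_combination ((X:Polynomial ℂ)^s * X^s * (∏ k, ((X:Polynomial ℂ) ^ m k - 1))
    * (∏ k, ((X:Polynomial ℂ) ^ m k + 1))) * hsign

theorem stmt_9' (F : RatFunc ℂ → RatFunc ℂ)
    (hF : ∀ R : RatFunc ℂ, ∀ k : ℤ, ((F R : LaurentSeries ℂ)).coeff k
      = ((R : LaurentSeries ℂ)).coeff (2 * k + 1))
    (n : ℕ) (hn : 1 ≤ n) (m : Fin n → ℕ) (hodd : ∀ k, Odd (m k)) (hpos : ∀ k, 0 < m k)
    (R : RatFunc ℂ)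
    (hR : ∃ (P : Polynomial ℂ) (s : ℕ),
      R = algebraMap (Polynomial ℂ) (RatFunc ℂ) P /
        (RatFunc.X ^ s * algebraMap (Polynomial ℂ) (RatFunc ℂ) (∏ k, (X ^ m k - 1)))) :
    ∃ (P : Polynomial ℂ) (s : ℕ),
      F R = algebraMap (Polynomial ℂ) (RatFunc ℂ) P /
        (RatFunc.X ^ s * algebraMap (Polynomial ℂ) (RatFunc ℂ) (∏ k, (X ^ m k - 1))) := by
  classical
  obtain ⟨P, s, hRdef⟩ := hR
  set Q : Polynomial ℂ := ∏ k, (X ^ m k - 1) with hQdef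
  have hQmon : Q.Monic := by
    apply monic_prod_of_monic
    intro k _
    have := Polynomial.monic_X_pow_sub_C (1:ℂ) (hpos k).ne'
    simpa using this
  have hA : (RatFunc.X ^ s * algebraMap (Polynomial ℂ) (RatFunc ℂ) Q)
      = algebraMap (Polynomial ℂ) (RatFunc ℂ) (X ^ s * Q) := by
    rw [map_mul, map_pow, RatFunc.algebraMap_X]
  have hA0 : algebraMap (Polynomial ℂ) (RatFunc ℂ) (X ^ s * Q) ≠ 0 :=
    RatFunc.algebraMap_ne_zero (mul_ne_zero (pow_ne_zero _ X_ne_zero) hQmon.ne_zero)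
  have hRA : algebraMap (Polynomial ℂ) (RatFunc ℂ) (X^s*Q) * R
      = algebraMap (Polynomial ℂ) (RatFunc ℂ) P := by
    rw [hRdef, hA, mul_comm, div_mul_cancel₀ _ hA0]
  set B : Polynomial ℂ := (-1)^n * ((X:Polynomial ℂ)^s * Q.comp (-X)) with hBdef
  have hkey : (X^s*Q) * B = ((X:Polynomial ℂ)^s*Q).comp (X^2) := key_poly n m hodd s
  set N : Polynomial ℂ := B * P with hNdef
  have hRat : algebraMap (Polynomial ℂ) (RatFunc ℂ) (((X:Polynomial ℂ)^s*Q).comp (X^2)) * R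
      = algebraMap (Polynomial ℂ) (RatFunc ℂ) N := by
    rw [← hkey, hNdef]
    calc algebraMap (Polynomial ℂ) (RatFunc ℂ) ((X^s*Q) * B) * R
        = algebraMap (Polynomial ℂ) (RatFunc ℂ) B
          * (algebraMap (Polynomial ℂ) (RatFunc ℂ) (X^s*Q) * R) := by rw [map_mul]; ring
      _ = algebraMap (Polynomial ℂ) (RatFunc ℂ) B
          * algebraMap (Polynomial ℂ) (RatFunc ℂ) P := by rw [hRA]
      _ = algebraMap (Polynomial ℂ) (RatFunc ℂ) (B * P) := (map_mul _ _ _).symm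
  have hLaurent : Lp (((X:Polynomial ℂ)^s*Q).comp (X^2)) * (R : LaurentSeries ℂ) = Lp N := by
    have := congrArg (fun z : RatFunc ℂ => (z : LaurentSeries ℂ)) hRat
    simpa only [map_mul, Lp_coe] using this
  have hD := Dop_comp_sq_mul ((X:Polynomial ℂ)^s*Q) (R : LaurentSeries ℂ)
  rw [hLaurent] at hD
  have hDR : Dop (R : LaurentSeries ℂ) = ((F R : RatFunc ℂ) : LaurentSeries ℂ) := by
    ext k
    rw [Dop_coeff]
    exact (hF R k).symm
  set d : ℕ := N.natDegree with hd
  set N' : Polynomial ℂ := ∑ i ∈ Finset.range (d+1), monomial i (N.coeff (2*i+1)) with hN'def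
  have hN' : ∀ j : ℕ, N'.coeff j = N.coeff (2*j+1) := by
    intro j
    rw [hN'def, finset_sum_coeff]
    simp_rw [coeff_monomial]
    rw [Finset.sum_ite_eq' (Finset.range (d+1)) j]
    by_cases hj : j ∈ Finset.range (d+1)
    · simp [hj]
    · rw [if_neg hj, eq_comm]
      apply coeff_eq_zero_of_natDegree_lt
      simp only [Finset.mem_range] at hj
      omega
  have hDN : Dop (Lp N) = Lp N' := by
    ext k
    rw [Dop_coeff]
    rcases lt_or_ge k 0 with hk | hk
    · rw [Lp_coeff_neg N _ (by omega), Lp_coeff_neg N' k hk]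
    · obtain ⟨a, rfl⟩ := Int.eq_ofNat_of_zero_le hk
      have hcast : (2*(a:ℤ)+1) = ((2*a+1 : ℕ) : ℤ) := by push_cast; ring
      rw [hcast, Lp_coeff_nat, Lp_coeff_nat, hN']
  have hfinal : ((algebraMap (Polynomial ℂ) (RatFunc ℂ) (X^s*Q) * F R : RatFunc ℂ)
      : LaurentSeries ℂ)
      = ((algebraMap (Polynomial ℂ) (RatFunc ℂ) N' : RatFunc ℂ) : LaurentSeries ℂ) := by
    rw [map_mul, Lp_coe, Lp_coe, ← hDN, hD, hDR]
  have heq := RingHom.injective _ hfinal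
  refine ⟨N', s, ?_⟩
  rw [hA, eq_div_iff hA0, mul_comm]
  exact heq


/-- The class of rational functions with denominator `Q_n = ∏ (X^{m_k} - 1)` (for odd
positive exponents `m_k`) and Laurent-polynomial numerator is invariant under `𝔉`. -/
theorem stmt_9 (F : RatFunc ℂ → RatFunc ℂ)
    (hF : ∀ R : RatFunc ℂ, ∀ k : ℤ, coeffL (F R) k = coeffL R (2 * k + 1))
    (n : ℕ) (hn : 1 ≤ n) (m : Fin n → ℕ) (hodd : ∀ k, Odd (m k)) (hpos : ∀ k, 0 < m k)
    (R : RatFunc ℂ)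
    (hR : IsLaurentOver (∏ k, (Polynomial.X ^ m k - 1)) R) :
    IsLaurentOver (∏ k, (Polynomial.X ^ m k - 1)) (F R) := by
  exact stmt_9' F hF n hn m hodd hpos R hR
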